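/- Let Ĝ : [0,T] → ℝ be C² on (0,T] with |Ĝ''(t)| ≤ Q t^{α₀−2} for some α₀ ∈ (1,2). Define the midpoint-trapezoidal error R₂ⁿ = (1/τ)∫_{t_{n-1}}^{t_n} Ĝ(t) dt − (Ĝ(t_n) + Ĝ(t_{n-1}))/2. Then τ ∑_{n=1}^N |R₂ⁿ| ≤ C τ² where C depends only on Q, α₀ and T. -/

import Mathlib

open MeasureTheory intervalIntegral Set Filter Topology

lemma trap_key (Q α₀ T : ℝ) (hQ : 0 < Q) (hα₀ : α₀ ∈ Set.Ioo (1:ℝ) 2) 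
    (G G' G'' : ℝ → ℝ)
    (hG' : ∀ s ∈ Set.Ioc 0 T, HasDerivAt G (G' s) s)
    (hG'' : ∀ s ∈ Set.Ioc 0 T, HasDerivAt G' (G'' s) s)
    (hbd : ∀ s ∈ Set.Ioc 0 T, |G'' s| ≤ Q * s ^ (α₀ - 2))
    (a b : ℝ) (ha : 0 < a) (hab : a < b) (hbT : b ≤ T) :
    |(∫ s in a..b, G s) - (b - a) * (G b + G a) / 2|
      ≤ ((b - a)^2 / 8) * ∫ s in a..b, Q * s ^ (α₀ - 2) := by
  have hsub : Set.uIcc a b ⊆ Set.Ioc 0 T := by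
    rw [Set.uIcc_of_le hab.le]
    exact fun x hx => ⟨lt_of_lt_of_le ha hx.1, le_trans hx.2 hbT⟩
  have hφd : ∀ x : ℝ, HasDerivAt (fun s => (s - a) * (b - s) / 2) ((a + b - 2*x)/2) x := by
    intro x
    have h := (((hasDerivAt_id x).sub_const a).mul
      ((hasDerivAt_const x b).sub (hasDerivAt_id x))).div_const 2
    refine h.congr_deriv ?_
    simp only [Pi.sub_apply, id_eq]; ring
  have hφ'd : ∀ x : ℝ, HasDerivAt (fun s => (a + b - 2*s)/2) (-1 : ℝ) x := by
    intro x
    have h := (((hasDerivAt_id x).const_mul 2).const_sub (a+b)).div_const 2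
    refine h.congr_deriv ?_
    norm_num
  have hG'cont : ContinuousOn G' (Set.uIcc a b) :=
    fun x hx => ((hG'' x (hsub hx)).continuousAt).continuousWithinAt
  have hrint : IntervalIntegrable (fun s => Q * s ^ (α₀ - 2)) volume a b :=
    (intervalIntegrable_rpow' (by linarith [hα₀.1] : (-1:ℝ) < α₀ - 2)).const_mul Q
  have hG''int : IntervalIntegrable G'' volume a b := by
    rw [intervalIntegrable_iff, Set.uIoc_of_le hab.le]
    have hS : Set.Ioc a b ⊆ Set.Ioc 0 T :=
      fun x hx => ⟨lt_trans ha hx.1, le_trans hx.2 hbT⟩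
    have hm : AEStronglyMeasurable G'' (volume.restrict (Set.Ioc a b)) := by
      refine ((measurable_deriv G').aestronglyMeasurable.restrict).congr ?_
      refine Filter.eventuallyEq_of_mem (self_mem_ae_restrict measurableSet_Ioc) ?_
      intro x hx
      exact (hG'' x (hS hx)).deriv
    refine ⟨hm, HasFiniteIntegral.restrict_of_bounded (C := Q * a ^ (α₀ - 2))
      (by simp [Real.volume_Ioc]) ?_⟩
    refine (ae_restrict_iff' measurableSet_Ioc).2 (Filter.Eventually.of_forall ?_)
    intro x hx
    have h1 := hbd x (hS hx)
    have h2 : x ^ (α₀ - 2) ≤ a ^ (α₀ - 2) :=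
      Real.rpow_le_rpow_of_nonpos ha hx.1.le (by linarith [hα₀.2])
    calc ‖G'' x‖ = |G'' x| := rfl
    _ ≤ Q * x ^ (α₀ - 2) := h1
    _ ≤ Q * a ^ (α₀ - 2) := by nlinarith
  have ibp2 : ∫ x in a..b, ((a + b - 2*x)/2) * G' x
      = ((a + b - 2*b)/2) * G b - ((a + b - 2*a)/2) * G a - ∫ x in a..b, (-1 : ℝ) * G x :=
    integral_mul_deriv_eq_deriv_mul (fun x _ => hφ'd x) (fun x hx => hG' x (hsub hx))
      (intervalIntegrable_const) (hG'cont.intervalIntegrable)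
  have ibp1 : ∫ x in a..b, ((x - a) * (b - x) / 2) * G'' x
      = ((b - a) * (b - b) / 2) * G' b - ((a - a) * (b - a) / 2) * G' a
        - ∫ x in a..b, ((a + b - 2*x)/2) * G' x :=
    integral_mul_deriv_eq_deriv_mul (fun x _ => hφd x) (fun x hx => hG'' x (hsub hx))
      ((by continuity : Continuous fun s : ℝ => (a + b - 2*s)/2).continuousOn.intervalIntegrable)
      hG''int
  have hneg : ∫ x in a..b, (-1 : ℝ) * G x = -∫ x in a..b, G x := by
    simp [neg_one_mul, intervalIntegral.integral_neg]
  have hkey : (∫ s in a..b, G s) - (b - a) * (G b + G a) / 2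
      = -(∫ x in a..b, ((x - a) * (b - x) / 2) * G'' x) := by
    rw [ibp1, ibp2, hneg]; ring
  rw [hkey, abs_neg]
  calc |∫ x in a..b, ((x - a) * (b - x) / 2) * G'' x|
      ≤ ∫ x in a..b, |((x - a) * (b - x) / 2) * G'' x| :=
        intervalIntegral.abs_integral_le_integral_abs hab.le
    _ ≤ ∫ x in a..b, ((b - a)^2 / 8) * (Q * x ^ (α₀ - 2)) := by
        refine intervalIntegral.integral_mono_on hab.le
          ((hG''int.continuousOn_mul ((by fun_prop : Continuous fun x : ℝ => (x - a) * (b - x) / 2).continuousOn)).abs) (hrint.const_mul _) ?_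
        intro x hx
        have h1 := hbd x (hsub (by rwa [Set.uIcc_of_le hab.le]))
        have hφnn : 0 ≤ (x - a) * (b - x) / 2 := by
          have := hx.1; have := hx.2; nlinarith
        have hφle : (x - a) * (b - x) / 2 ≤ (b - a)^2 / 8 := by nlinarith [sq_nonneg (a + b - 2*x)]
        rw [abs_mul, abs_of_nonneg hφnn]
        have hB : (0:ℝ) ≤ |G'' x| := abs_nonneg _
        nlinarith
    _ = ((b - a)^2 / 8) * ∫ s in a..b, Q * s ^ (α₀ - 2) := intervalIntegral.integral_const_mul _ _

lemma trap_first (Q α₀ T : ℝ) (hQ : 0 < Q) (hα₀ : α₀ ∈ Set.Ioo (1:ℝ) 2)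
    (G G' G'' : ℝ → ℝ)
    (hGc : ContinuousOn G (Set.Icc 0 T))
    (hG' : ∀ s ∈ Set.Ioc 0 T, HasDerivAt G (G' s) s)
    (hG'' : ∀ s ∈ Set.Ioc 0 T, HasDerivAt G' (G'' s) s)
    (hbd : ∀ s ∈ Set.Ioc 0 T, |G'' s| ≤ Q * s ^ (α₀ - 2))
    (τ : ℝ) (hτ : 0 < τ) (hτT : τ ≤ T) :
    |(∫ s in (0:ℝ)..τ, G s) - τ * (G τ + G 0) / 2|
      ≤ (τ^2 / 8) * ∫ s in (0:ℝ)..τ, Q * s ^ (α₀ - 2) := by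
  set l : Filter ℝ := 𝓝[Set.Ioo (0:ℝ) τ] (0:ℝ) with hl
  have hne : l.NeBot := by
    rw [hl, ← mem_closure_iff_nhdsWithin_neBot, closure_Ioo hτ.ne]
    exact ⟨le_refl 0, hτ.le⟩
  have hrint : ∀ u v : ℝ, IntervalIntegrable (fun s => Q * s ^ (α₀ - 2)) volume u v :=
    fun u v => (intervalIntegrable_rpow' (by linarith [hα₀.1] : (-1:ℝ) < α₀ - 2)).const_mul Q
  have hGint : IntegrableOn G (Set.uIcc 0 τ) volume := by
    rw [Set.uIcc_of_le hτ.le]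
    exact (hGc.mono (Set.Icc_subset_Icc_right hτT)).integrableOn_Icc
  have T1 : Tendsto (fun ε => ∫ s in ε..τ, G s) l (𝓝 (∫ s in (0:ℝ)..τ, G s)) := by
    have h := (continuousOn_primitive_interval_left hGint) 0
      (by rw [Set.uIcc_of_le hτ.le]; exact ⟨le_refl 0, hτ.le⟩)
    exact h.mono_left (nhdsWithin_mono 0 (by
      rw [Set.uIcc_of_le hτ.le]; exact Set.Ioo_subset_Icc_self))
  have T2 : Tendsto G l (𝓝 (G 0)) := by
    have h := hGc.continuousWithinAt (Set.left_mem_Icc.2 (le_trans hτ.le hτT)) 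
    exact h.mono_left (nhdsWithin_mono 0 (fun x hx => ⟨hx.1.le, le_trans hx.2.le hτT⟩))
  have Tε : Tendsto (fun ε : ℝ => ε) l (𝓝 0) := tendsto_id.mono_left nhdsWithin_le_nhds
  have TF : Tendsto (fun ε => |(∫ s in ε..τ, G s) - (τ - ε) * (G τ + G ε) / 2|) l
      (𝓝 |(∫ s in (0:ℝ)..τ, G s) - (τ - 0) * (G τ + G 0) / 2|) :=
    (T1.sub (((tendsto_const_nhds.sub Tε).mul (tendsto_const_nhds.add T2)).div_const 2)).abs
  rw [show τ * (G τ + G 0) / 2 = (τ - 0) * (G τ + G 0) / 2 by ring]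
  refine le_of_tendsto TF ?_
  filter_upwards [self_mem_nhdsWithin] with ε hε
  have h1 := trap_key Q α₀ T hQ hα₀ G G' G'' hG' hG'' hbd ε τ hε.1 hε.2 hτT
  refine h1.trans ?_
  have hsplit : (∫ s in (0:ℝ)..ε, Q * s ^ (α₀ - 2)) + ∫ s in ε..τ, Q * s ^ (α₀ - 2)
      = ∫ s in (0:ℝ)..τ, Q * s ^ (α₀ - 2) :=
    integral_add_adjacent_intervals (hrint 0 ε) (hrint ε τ)
  have hnn : ∀ u v : ℝ, 0 ≤ u → u ≤ v → (0:ℝ) ≤ ∫ s in u..v, Q * s ^ (α₀ - 2) :=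
    fun u v h0 huv => intervalIntegral.integral_nonneg huv
      (fun x hx => mul_nonneg hQ.le (Real.rpow_nonneg (le_trans h0 hx.1) _))
  have h2 : (∫ s in ε..τ, Q * s ^ (α₀ - 2)) ≤ ∫ s in (0:ℝ)..τ, Q * s ^ (α₀ - 2) := by
    have := hnn 0 ε le_rfl hε.1.le; linarith
  have h3 : ((τ - ε)^2 / 8) ≤ τ^2 / 8 := by nlinarith [hε.1, hε.2]
  have h4 := hnn ε τ hε.1.le hε.2.le
  nlinarith [hnn 0 τ le_rfl (le_trans hε.1.le hε.2.le)]

open MeasureTheory intervalIntegral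

/-- second-order summed bound for the midpoint-trapezoidal error R₂ⁿ. -/
theorem midpoint_trapezoid_error_bound (Q α₀ T : ℝ) (hQ : 0 < Q)
    (hα₀ : α₀ ∈ Set.Ioo (1:ℝ) 2) (hT : 0 < T) :
    ∃ C > 0, ∀ (N : ℕ), 0 < N → ∀ (τ : ℝ), τ = T / N →
      ∀ (G G' G'' : ℝ → ℝ),
      ContinuousOn G (Set.Icc 0 T) →
      (∀ s ∈ Set.Ioc 0 T, HasDerivAt G (G' s) s) →
      (∀ s ∈ Set.Ioc 0 T, HasDerivAt G' (G'' s) s) →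
      (∀ s ∈ Set.Ioc 0 T, |G'' s| ≤ Q * s ^ (α₀ - 2)) →
      τ * ∑ n ∈ Finset.Icc 1 N,
        |(1/τ) * (∫ s in (((n-1 : ℕ) : ℝ) * τ)..((n : ℝ) * τ), G s)
          - (G ((n : ℝ) * τ) + G (((n-1 : ℕ) : ℝ) * τ)) / 2|
        ≤ C * τ^2 := by
  obtain ⟨hα1, hα2⟩ := hα₀
  have hTpow : 0 < T ^ (α₀ - 1) := Real.rpow_pos_of_pos hT _
  refine ⟨Q * T ^ (α₀ - 1) / (8 * (α₀ - 1)), div_pos (mul_pos hQ hTpow) (by linarith), ?_⟩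
  intro N hN τ hτdef G G' G'' hGc hG' hG'' hbd
  have hNR : (0:ℝ) < N := Nat.cast_pos.2 hN
  have hτ : 0 < τ := by rw [hτdef]; positivity
  have hNτ : (N:ℝ) * τ = T := by rw [hτdef]; field_simp
  have hrint : ∀ u v : ℝ, IntervalIntegrable (fun s => Q * s ^ (α₀ - 2)) volume u v :=
    fun u v => (intervalIntegrable_rpow' (by linarith : (-1:ℝ) < α₀ - 2)).const_mul Q
  have hterm : ∀ n ∈ Finset.Icc 1 N,
      τ * |(1/τ) * (∫ s in (((n-1 : ℕ) : ℝ) * τ)..((n : ℝ) * τ), G s)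
          - (G ((n : ℝ) * τ) + G (((n-1 : ℕ) : ℝ) * τ)) / 2|
      ≤ (τ^2/8) * ∫ s in (((n-1 : ℕ) : ℝ) * τ)..((n : ℝ) * τ), Q * s ^ (α₀ - 2) := by
    intro n hn
    obtain ⟨hn1, hnN⟩ := Finset.mem_Icc.1 hn
    have hcast : ((n-1 : ℕ) : ℝ) = (n : ℝ) - 1 := by
      push_cast [Nat.cast_sub hn1]; ring
    have hbT : (n : ℝ) * τ ≤ T := by
      have : (n:ℝ) ≤ N := Nat.cast_le.2 hnN
      nlinarith
    have habs : τ * |(1/τ) * (∫ s in (((n-1 : ℕ) : ℝ) * τ)..((n : ℝ) * τ), G s)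
          - (G ((n : ℝ) * τ) + G (((n-1 : ℕ) : ℝ) * τ)) / 2|
        = |(∫ s in (((n-1 : ℕ) : ℝ) * τ)..((n : ℝ) * τ), G s)
          - τ * (G ((n : ℝ) * τ) + G (((n-1 : ℕ) : ℝ) * τ)) / 2| := by
      have hmul : (∫ s in (((n-1 : ℕ) : ℝ) * τ)..((n : ℝ) * τ), G s)
          - τ * (G ((n : ℝ) * τ) + G (((n-1 : ℕ) : ℝ) * τ)) / 2
          = τ * ((1/τ) * (∫ s in (((n-1 : ℕ) : ℝ) * τ)..((n : ℝ) * τ), G s)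
          - (G ((n : ℝ) * τ) + G (((n-1 : ℕ) : ℝ) * τ)) / 2) := by
        field_simp
      rw [hmul, abs_mul, abs_of_pos hτ]
    rw [habs]
    rcases eq_or_lt_of_le hn1 with h1 | h2
    · -- n = 1
      have hn1' : n = 1 := h1.symm
      subst hn1'
      simp only [Nat.sub_self, Nat.cast_zero, Nat.cast_one, zero_mul, one_mul]
      exact trap_first Q α₀ T hQ ⟨hα1, hα2⟩ G G' G'' hGc hG' hG'' hbd τ hτ
        (by
          have h1N : (1:ℝ) ≤ N := by exact_mod_cast hN
          nlinarith)
    · -- n ≥ 2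
      have ha : 0 < ((n-1 : ℕ) : ℝ) * τ := by
        rw [hcast]
        have : (2:ℝ) ≤ n := by exact_mod_cast h2
        nlinarith
      have hab : ((n-1 : ℕ) : ℝ) * τ < (n : ℝ) * τ := by rw [hcast]; nlinarith
      have h := trap_key Q α₀ T hQ ⟨hα1, hα2⟩ G G' G'' hG' hG'' hbd
        (((n-1 : ℕ) : ℝ) * τ) ((n : ℝ) * τ) ha hab hbT
      have hba : (n : ℝ) * τ - ((n-1 : ℕ) : ℝ) * τ = τ := by rw [hcast]; ring
      rw [hba] at h
      exact h
  calc τ * ∑ n ∈ Finset.Icc 1 N,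
        |(1/τ) * (∫ s in (((n-1 : ℕ) : ℝ) * τ)..((n : ℝ) * τ), G s)
          - (G ((n : ℝ) * τ) + G (((n-1 : ℕ) : ℝ) * τ)) / 2|
      = ∑ n ∈ Finset.Icc 1 N, τ *
        |(1/τ) * (∫ s in (((n-1 : ℕ) : ℝ) * τ)..((n : ℝ) * τ), G s)
          - (G ((n : ℝ) * τ) + G (((n-1 : ℕ) : ℝ) * τ)) / 2| := Finset.mul_sum _ _ _
    _ ≤ ∑ n ∈ Finset.Icc 1 N,
        (τ^2/8) * ∫ s in (((n-1 : ℕ) : ℝ) * τ)..((n : ℝ) * τ), Q * s ^ (α₀ - 2) :=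
        Finset.sum_le_sum hterm
    _ = (τ^2/8) * ∑ n ∈ Finset.Icc 1 N,
        ∫ s in (((n-1 : ℕ) : ℝ) * τ)..((n : ℝ) * τ), Q * s ^ (α₀ - 2) := by
        rw [Finset.mul_sum]
    _ = (τ^2/8) * ∫ s in (0:ℝ)..T, Q * s ^ (α₀ - 2) := by
        congr 1
        have tele : ∑ i ∈ Finset.range N,
            (∫ s in ((i:ℝ)*τ)..(((i:ℝ)+1)*τ), Q * s ^ (α₀ - 2))
            = ∫ s in (0:ℝ)..((N:ℝ)*τ), Q * s ^ (α₀ - 2) := by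
          have h := sum_integral_adjacent_intervals (μ := volume)
            (a := fun k : ℕ => (k:ℝ)*τ) (n := N) (fun k _ => hrint _ _)
          push_cast at h
          simpa using h
        rw [← hNτ, ← tele, ← Finset.Ico_add_one_right_eq_Icc, Finset.sum_Ico_eq_sum_range]
        refine Finset.sum_congr rfl (fun i _ => ?_)
        have hi : 1 + i - 1 = i := by omega
        rw [hi]
        push_cast
        ring_nf
    _ = Q * T ^ (α₀ - 1) / (8 * (α₀ - 1)) * τ^2 := by
        rw [intervalIntegral.integral_const_mul,
          integral_rpow (Or.inl (by linarith : (-1:ℝ) < α₀ - 2)),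
          Real.zero_rpow (by linarith : α₀ - 2 + 1 ≠ 0),
          show α₀ - 2 + 1 = α₀ - 1 by ring]
        field_simp
        ring
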